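/- Let q ≥ 2 and m ≥ 1 be integers and 1 ≤ d ≤ m(q-1)+1. Then α_q(d,m) = β_q(d,m), where α_q(d,m) := Σ_{e=1, e≡d mod (q-1)}^{d} Σ_{j=0}^{m+1} (-1)^j C(m+1,j) C(e−jq+m, e−jq) and β_q(d,m) := C(m+d,d) − Σ_{j=2}^{m+1} (-1)^j C(m+1,j) Σ_{i=0}^{j-2} C(d+(i+1)(q−1)−jq+m, d+(i+1)(q−1)−jq). -/

import Mathlib

/-- Generalized binomial coefficient `C(a,b)` for integers `a, b`:
`a(a-1)⋯(a-b+1)/b!` when `b ≥ 0`, and `0` when `b < 0`. -/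
def intBinom (a b : ℤ) : ℤ :=
  if b < 0 then 0
  else if 0 ≤ a then (a.toNat.choose b.toNat : ℤ)
  else (-1) ^ b.toNat * ((b - a - 1).toNat.choose b.toNat : ℤ)

open Finset

private def Bb (m : ℕ) (x : ℤ) : ℤ := if 0 ≤ x then ((x.toNat + m).choose m : ℤ) else 0

private lemma Bb_neg {m : ℕ} {x : ℤ} (h : x < 0) : Bb m x = 0 := by
  simp [Bb, not_le.mpr h]

private lemma Bb_zero (m : ℕ) : Bb m 0 = 1 := by simp [Bb]

private lemma intBinom_eq_Bb (m : ℕ) (x : ℤ) : intBinom (x + (m:ℤ)) x = Bb m x := by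
  unfold intBinom Bb
  by_cases h : x < 0
  · rw [if_pos h, if_neg (not_le.mpr h)]
  · push_neg at h
    rw [if_neg (not_lt.mpr h), if_pos (by omega : (0:ℤ) ≤ x + m), if_pos h]
    have h1 : (x + (m:ℤ)).toNat = x.toNat + m := by omega
    rw [h1]
    norm_cast
    rw [← Nat.choose_symm (by omega : x.toNat ≤ x.toNat + m)]
    congr 1
    omega

private lemma Bb_diff (m : ℕ) (y : ℤ) : Bb (m+1) y - Bb (m+1) (y-1) = Bb m y := by
  rcases lt_trichotomy y 0 with h | h | h
  · rw [Bb_neg h, Bb_neg (by omega), Bb_neg h]; ring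
  · subst h; rw [Bb_zero, Bb_neg (by omega), Bb_zero]; ring
  · obtain ⟨n, rfl⟩ : ∃ n : ℕ, y = (n : ℤ) + 1 := ⟨(y-1).toNat, by omega⟩
    unfold Bb
    rw [if_pos (by omega), if_pos (by omega), if_pos (by omega)]
    have e1 : ((n:ℤ)+1).toNat = n+1 := by omega
    have e2 : ((n:ℤ)+1-1).toNat = n := by omega
    rw [e1, e2]
    rw [show n+1+(m+1) = (n+m+1)+1 by ring, show n+(m+1) = n+m+1 by ring,
      show n+1+m = n+m+1 by ring, Nat.choose_succ_succ]
    push_cast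
    ring

private lemma fd (n : ℕ) (f : ℤ → ℤ) (x : ℤ) :
    ∑ j ∈ range (n+2), (-1:ℤ)^j * ((n+1).choose j : ℤ) * f (x - j)
      = ∑ j ∈ range (n+1), (-1:ℤ)^j * (n.choose j : ℤ) * (f (x - j) - f (x - j - 1)) := by
  have h2 : ∑ j ∈ range (n+1), (-1:ℤ)^(j+1) * ((n).choose (j+1):ℤ) * f (x - ((j:ℤ)+1))
      = (∑ j ∈ range (n+1), (-1:ℤ)^j * (n.choose j : ℤ) * f (x - j)) - f x := by
    have h := Finset.sum_range_succ' (fun j => (-1:ℤ)^j * (n.choose j:ℤ) * f (x - j)) (n+1)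
    rw [Finset.sum_range_succ] at h
    simp only [Nat.choose_succ_self, Nat.cast_zero, mul_zero, zero_mul, mul_one, add_zero,
      Nat.choose_zero_right, Nat.cast_one, pow_zero, one_mul, Nat.cast_zero, sub_zero] at h
    push_cast at h ⊢
    linarith [h]
  rw [Finset.sum_range_succ']
  have hsplit : ∀ j ∈ range (n+1),
      (-1:ℤ)^(j+1) * (((n+1)).choose (j+1):ℤ) * f (x - ((j:ℕ)+1 : ℕ))
      = (-((-1:ℤ)^j * ((n).choose j:ℤ) * f (x - j - 1)))
        + (-1:ℤ)^(j+1) * ((n).choose (j+1):ℤ) * f (x - ((j:ℤ)+1)) := by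
    intro j _
    have harg : x - ((j:ℕ)+1 : ℕ) = x - (j:ℤ) - 1 := by push_cast; ring
    have harg2 : x - ((j:ℤ)+1) = x - (j:ℤ) - 1 := by ring
    rw [Nat.choose_succ_succ, harg, harg2]
    push_cast
    ring
  rw [Finset.sum_congr rfl hsplit, Finset.sum_add_distrib, h2]
  simp only [pow_zero, Nat.choose_zero_right, Nat.cast_one, one_mul, Nat.cast_zero, sub_zero,
    mul_sub, Finset.sum_sub_distrib, Finset.sum_neg_distrib]
  ring

private lemma key (m : ℕ) (x : ℤ) :
    ∑ j ∈ range (m+2), (-1:ℤ)^j * ((m+1).choose j : ℤ) * Bb m (x - j)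
      = if x = 0 then 1 else 0 := by
  induction m generalizing x with
  | zero =>
    rw [Finset.sum_range_succ, Finset.sum_range_succ, Finset.sum_range_zero]
    simp only [Bb, Nat.add_zero, Nat.choose_zero_right, Nat.cast_one, Nat.cast_zero,
      Nat.choose_one_right, Nat.cast_ofNat, pow_zero, pow_one, sub_zero]
    split_ifs <;> omega
  | succ m ih =>
    rw [show m+1+2 = (m+1)+2 from rfl, fd (m+1) (Bb (m+1)) x]
    rw [Finset.sum_congr rfl (fun j _ => by rw [Bb_diff m (x - j)])]
    exact ih x

private def Gb (m q1 : ℕ) (x : ℤ) (N : ℕ) : ℤ := ∑ k ∈ range N, Bb m (x - k * q1)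

private lemma gb_stab (m q1 : ℕ) (hq1 : 1 ≤ q1) (x : ℤ) {N M : ℕ} (hN : x < N) (hNM : N ≤ M) :
    Gb m q1 x M = Gb m q1 x N := by
  unfold Gb
  symm
  apply Finset.sum_subset (Finset.range_subset_range.mpr hNM)
  intro k hk hk'
  simp only [mem_range, not_lt] at hk hk'
  apply Bb_neg
  have h1 : (N:ℤ) ≤ k := by exact_mod_cast hk'
  have h2 : (k:ℤ) ≤ (k:ℤ) * q1 := le_mul_of_one_le_right (by positivity) (by exact_mod_cast hq1)
  linarith

private lemma gb_chain (m q1 : ℕ) (hq1 : 1 ≤ q1) (N : ℕ) :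
    ∀ (t : ℕ) (x : ℤ), x < N →
      Gb m q1 x (N + t) = (∑ i ∈ range t, Bb m (x - i * q1)) + Gb m q1 (x - t * q1) N := by
  have hq1' : (1:ℤ) ≤ (q1:ℤ) := by exact_mod_cast hq1
  intro t
  induction t with
  | zero => intro x hx; simp [Gb]
  | succ t ih =>
    intro x hx
    have hrec : Gb m q1 x (N + t + 1) = Bb m x + Gb m q1 (x - q1) (N + t) := by
      unfold Gb
      rw [Finset.sum_range_succ' (fun k => Bb m (x - k * q1)) (N + t)]
      rw [Finset.sum_congr rfl (fun k _ => by
        show Bb m (x - ((k:ℕ)+1 : ℕ) * q1) = Bb m (x - q1 - k * q1)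
        congr 1; push_cast; ring)]
      simp only [Nat.cast_zero, zero_mul, sub_zero]
      ring
    rw [show N + (t+1) = N + t + 1 from rfl, hrec, ih (x - q1) (by linarith)]
    rw [Finset.sum_range_succ' (fun i => Bb m (x - i * q1)) t]
    rw [Finset.sum_congr rfl (fun i _ => by
      show Bb m (x - q1 - i * q1) = Bb m (x - ((i:ℕ)+1 : ℕ) * q1)
      congr 1; push_cast; ring)]
    have harg : x - q1 - (t:ℤ) * q1 = x - ((t:ℕ)+1 : ℕ) * q1 := by push_cast; ring
    rw [harg]
    simp only [Nat.cast_zero, zero_mul, sub_zero]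
    push_cast
    ring

private lemma ind_sum (q1 d : ℕ) (hq1 : 1 ≤ q1) :
    ∑ k ∈ range (d+1), (if k * q1 = d then (1:ℤ) else 0) = if q1 ∣ d then 1 else 0 := by
  by_cases h : q1 ∣ d
  · obtain ⟨c, rfl⟩ := h
    have hc : ∀ k : ℕ, (k * q1 = q1 * c) = (k = c) := fun k => by
      apply propext
      constructor
      · intro hk
        exact Nat.eq_of_mul_eq_mul_right (by omega) (hk.trans (mul_comm q1 c))
      · rintro rfl; ring
    simp only [hc]
    rw [Finset.sum_ite_eq' (range (q1*c+1)) c (fun _ => (1:ℤ))]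
    rw [if_pos (mem_range.mpr (Nat.lt_succ_of_le (Nat.le_mul_of_pos_left c (by omega)))),
      if_pos ⟨c, rfl⟩]
  · rw [if_neg h]
    apply Finset.sum_eq_zero
    intro k _
    rw [if_neg]
    intro hk
    exact h ⟨k, by rw [← hk, mul_comm]⟩

private lemma E_eq (q1 d : ℕ) (hq1 : 1 ≤ q1) :
    (Icc 1 d).filter (fun e => e % q1 = d % q1)
      = ((range (d+1)).filter (fun k => k * q1 < d)).image (fun k => d - k * q1) := by
  ext e
  simp only [mem_filter, mem_image, mem_Icc, mem_range]
  constructor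
  · rintro ⟨⟨h1, h2⟩, h3⟩
    have hdvd : q1 ∣ d - e := (Nat.modEq_iff_dvd' h2).mp h3
    refine ⟨(d - e)/q1, ⟨?_, ?_⟩, ?_⟩
    · have : (d - e)/q1 ≤ d - e := Nat.div_le_self _ _
      omega
    · have := Nat.div_mul_cancel hdvd
      omega
    · have := Nat.div_mul_cancel hdvd
      omega
  · rintro ⟨k, ⟨hk1, hk2⟩, rfl⟩
    refine ⟨⟨by omega, by omega⟩, ?_⟩
    conv_rhs => rw [show d = (d - k * q1) + k * q1 from by omega]
    rw [Nat.add_mul_mod_self_right]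

private lemma sum_E (m q1 d : ℕ) (hq1 : 1 ≤ q1) (j : ℕ) :
    ∑ k ∈ range (d+1), Bb m ((d:ℤ) - k * q1 - j * ((q1:ℤ)+1))
      = (∑ e ∈ (Icc 1 d).filter (fun e => e % q1 = d % q1), Bb m ((e:ℤ) - j * ((q1:ℤ)+1)))
        + (if j = 0 ∧ q1 ∣ d then 1 else 0) := by
  rw [← Finset.sum_filter_add_sum_filter_not (range (d+1)) (fun k => k * q1 < d)]
  congr 1
  · rw [E_eq q1 d hq1, Finset.sum_image (fun a ha b hb hab => by
      simp only [Finset.coe_filter, Set.mem_setOf_eq, mem_filter, mem_range] at ha hb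
      have : a * q1 = b * q1 := by omega
      exact Nat.eq_of_mul_eq_mul_right (by omega) this)]
    apply Finset.sum_congr rfl
    intro k hk
    simp only [mem_filter, mem_range] at hk
    congr 1
    rw [Nat.cast_sub hk.2.le, Nat.cast_mul]
  · have hterm : ∀ k ∈ (range (d+1)).filter (fun k => ¬ k * q1 < d),
        Bb m ((d:ℤ) - k * q1 - j * ((q1:ℤ)+1)) = if j = 0 ∧ k * q1 = d then (1:ℤ) else 0 := by
      intro k hk
      simp only [mem_filter, mem_range, not_lt] at hk
      by_cases hj : j = 0 ∧ k * q1 = d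
      · obtain ⟨h1, h2⟩ := hj
        subst h1
        rw [if_pos ⟨rfl, h2⟩]
        have harg : (d:ℤ) - k * q1 - (0:ℕ) * ((q1:ℤ)+1) = 0 := by
          have : ((k * q1 : ℕ) : ℤ) = (d:ℤ) := by exact_mod_cast h2
          push_cast at this ⊢
          linarith
        rw [harg, Bb_zero]
      · rw [if_neg hj]
        apply Bb_neg
        have h1 : (d:ℤ) ≤ (k:ℤ) * q1 := by exact_mod_cast hk.2
        rcases Nat.eq_zero_or_pos j with rfl | hjp
        · have h2 : k * q1 ≠ d := fun hc => hj ⟨rfl, hc⟩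
          have h3 : (d:ℤ) ≠ (k:ℤ) * q1 := by
            intro hc; exact h2 (by exact_mod_cast hc.symm)
          push_cast
          have h4 : (d:ℤ) < (k:ℤ) * q1 := lt_of_le_of_ne h1 h3
          linarith
        · have h2 : (1:ℤ) ≤ (j:ℤ) := by exact_mod_cast hjp
          have h3 : (0:ℤ) ≤ (q1:ℤ) := by positivity
          nlinarith
    rw [Finset.sum_congr rfl hterm]
    by_cases hj : j = 0
    · subst hj
      simp only [true_and]
      rw [← ind_sum q1 d hq1]
      apply Finset.sum_subset (Finset.filter_subset _ _)
      intro k hk hk'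
      simp only [mem_filter, mem_range, not_and, not_lt, not_not] at hk'
      rw [if_neg]
      intro hc
      have := hk' (by simpa using hk)
      omega
    · simp only [hj, false_and, if_false]
      exact Finset.sum_eq_zero fun k _ => rfl

private lemma W_eq (m q1 d : ℕ) (j : ℕ) :
    ∑ i ∈ range j, Bb m ((d:ℤ) - j - i * q1)
      = Bb m ((d:ℤ) - j)
        + (∑ i ∈ range (j-1), Bb m ((d:ℤ) + ((i:ℤ)+1) * q1 - j * ((q1:ℤ)+1)))
        - (if j = 0 then Bb m (d:ℤ) else 0) := by
  cases j with
  | zero => simp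
  | succ t =>
    rw [if_neg (Nat.succ_ne_zero t)]
    rw [Finset.sum_range_succ' (fun i => Bb m ((d:ℤ) - ((t+1:ℕ):ℤ) - i * q1)) t]
    simp only [Nat.add_sub_cancel, Nat.cast_zero, zero_mul, sub_zero]
    rw [← Finset.sum_range_reflect
      (fun i => Bb m ((d:ℤ) + ((i:ℤ)+1) * q1 - ((t+1:ℕ):ℤ) * ((q1:ℤ)+1))) t]
    rw [Finset.sum_congr rfl (fun i hi => by
      have hit : i < t := mem_range.mp hi
      show Bb m ((d:ℤ) - ((t+1:ℕ):ℤ) - ((i:ℕ)+1 : ℕ) * q1)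
        = Bb m ((d:ℤ) + (((t - 1 - i : ℕ):ℤ)+1) * q1 - ((t+1:ℕ):ℤ) * ((q1:ℤ)+1))
      congr 1
      have hc : ((t - 1 - i : ℕ):ℤ) = (t:ℤ) - 1 - i := by omega
      rw [hc]
      push_cast
      ring)]
    ring

/-- Sørensen's formula equals the Mercier–Rolland formula for the dimension of
the projective Reed-Muller code `PRM_q(d,m)`. -/
theorem sorensen_eq_mercier_rolland (q m d : ℕ) (hq : 2 ≤ q) (hm : 1 ≤ m)
    (hd1 : 1 ≤ d) (hd2 : d ≤ m * (q - 1) + 1) :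
    (∑ e ∈ (Finset.Icc 1 d).filter (fun e => e % (q - 1) = d % (q - 1)),
        ∑ j ∈ Finset.range (m + 2), (-1 : ℤ) ^ j * ((m + 1).choose j : ℤ) *
          intBinom ((e : ℤ) - j * q + m) ((e : ℤ) - j * q))
      = intBinom ((m : ℤ) + d) d -
          ∑ j ∈ Finset.Icc 2 (m + 1), (-1 : ℤ) ^ j * ((m + 1).choose j : ℤ) *
            ∑ i ∈ Finset.range (j - 1),
              intBinom ((d : ℤ) + (i + 1) * (q - 1) - j * q + m)
                ((d : ℤ) + (i + 1) * (q - 1) - j * q) := by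
  obtain ⟨q1, rfl⟩ : ∃ t, q = t + 1 := ⟨q - 1, by omega⟩
  have hq1 : 1 ≤ q1 := by omega
  simp only [Nat.add_sub_cancel]
  calc
    (∑ e ∈ (Finset.Icc 1 d).filter (fun e => e % q1 = d % q1),
        ∑ j ∈ Finset.range (m + 2), (-1 : ℤ) ^ j * ((m + 1).choose j : ℤ) *
          intBinom ((e : ℤ) - j * (q1+1:ℕ) + m) ((e : ℤ) - j * (q1+1:ℕ)))
      = ∑ j ∈ range (m+2), (-1:ℤ)^j * ((m+1).choose j : ℤ) *
          ∑ e ∈ (Icc 1 d).filter (fun e => e % q1 = d % q1),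
            Bb m ((e:ℤ) - j * ((q1:ℤ)+1)) := by
        rw [Finset.sum_comm]
        refine Finset.sum_congr rfl fun j _ => ?_
        rw [Finset.mul_sum]
        refine Finset.sum_congr rfl fun e _ => ?_
        congr 1
        rw [← intBinom_eq_Bb m ((e:ℤ) - j * ((q1:ℤ)+1))]
        congr 1 <;> push_cast <;> ring
    _ = ∑ j ∈ range (m+2), (-1:ℤ)^j * ((m+1).choose j : ℤ) *
          ((∑ k ∈ range (d+1), Bb m ((d:ℤ) - k * q1 - j * ((q1:ℤ)+1)))
            - (if j = 0 ∧ q1 ∣ d then 1 else 0)) := by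
        refine Finset.sum_congr rfl fun j _ => ?_
        rw [sum_E m q1 d hq1 j]
        ring
    _ = (∑ j ∈ range (m+2), (-1:ℤ)^j * ((m+1).choose j : ℤ) *
          ∑ k ∈ range (d+1), Bb m ((d:ℤ) - k * q1 - j * ((q1:ℤ)+1)))
        - (if q1 ∣ d then 1 else 0) := by
        simp only [mul_sub, Finset.sum_sub_distrib]
        congr 1
        rw [Finset.sum_eq_single 0]
        · simp
        · intro j _ hj; simp [hj]
        · intro h; simp at h
    _ = (∑ j ∈ range (m+2), (-1:ℤ)^j * ((m+1).choose j : ℤ) *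
          (Gb m q1 ((d:ℤ) - j) (d+1) - ∑ i ∈ range j, Bb m ((d:ℤ) - j - i * q1)))
        - (if q1 ∣ d then 1 else 0) := by
        congr 1
        refine Finset.sum_congr rfl fun j _ => ?_
        congr 1
        have hlt : (d:ℤ) - (j:ℤ) < ((d+1:ℕ):ℤ) := by push_cast; omega
        have h1 := gb_chain m q1 hq1 (d+1) j ((d:ℤ) - j) hlt
        have h2 := gb_stab m q1 hq1 ((d:ℤ) - j) hlt (Nat.le_add_right (d+1) j)
        rw [h2] at h1
        have h3 : (d:ℤ) - j - (j:ℤ) * q1 = (d:ℤ) - j * ((q1:ℤ)+1) := by ring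
        rw [h3] at h1
        have h4 : ∑ k ∈ range (d+1), Bb m ((d:ℤ) - k * q1 - j * ((q1:ℤ)+1))
            = Gb m q1 ((d:ℤ) - j * ((q1:ℤ)+1)) (d+1) := by
          unfold Gb
          refine Finset.sum_congr rfl fun k _ => ?_
          congr 1
          ring
        rw [h4]
        linarith [h1]
    _ = (if q1 ∣ d then (1:ℤ) else 0)
        - (-Bb m (d:ℤ) + ∑ j ∈ range (m+2), (-1:ℤ)^j * ((m+1).choose j : ℤ) *
            ∑ i ∈ range (j-1), Bb m ((d:ℤ) + ((i:ℤ)+1) * q1 - j * ((q1:ℤ)+1)))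
        - (if q1 ∣ d then 1 else 0) := by
        congr 1
        simp only [mul_sub, Finset.sum_sub_distrib]
        congr 1
        · -- ∑ c j * Gb (d - j) (d+1) = if q1 ∣ d then 1 else 0
          have hstep : ∀ j ∈ range (m+2), (-1:ℤ)^j * ((m+1).choose j : ℤ) *
              Gb m q1 ((d:ℤ) - j) (d+1)
              = ∑ k ∈ range (d+1), (-1:ℤ)^j * ((m+1).choose j : ℤ) *
                  Bb m (((d:ℤ) - (k:ℤ) * q1) - j) := by
            intro j _
            unfold Gb
            rw [Finset.mul_sum]
            refine Finset.sum_congr rfl fun k _ => ?_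
            congr 1
            ring
          rw [Finset.sum_congr rfl hstep, Finset.sum_comm]
          have hstep2 : ∀ k ∈ range (d+1),
              (∑ j ∈ range (m+2), (-1:ℤ)^j * ((m+1).choose j : ℤ) *
                Bb m (((d:ℤ) - (k:ℤ) * q1) - j))
              = if k * q1 = d then (1:ℤ) else 0 := by
            intro k _
            rw [key m ((d:ℤ) - (k:ℤ) * q1)]
            by_cases h : k * q1 = d
            · rw [if_pos h, if_pos]
              have : ((k * q1 : ℕ) : ℤ) = (d:ℤ) := by exact_mod_cast h
              push_cast at this
              linarith
            · rw [if_neg h, if_neg]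
              intro hc
              apply h
              have : ((k * q1 : ℕ) : ℤ) = (d:ℤ) := by push_cast; linarith
              exact_mod_cast this
          rw [Finset.sum_congr rfl hstep2, ind_sum q1 d hq1]
        · -- ∑ c j * W j = -Bb d + ∑ c j * C j
          rw [Finset.sum_congr rfl (fun j _ => by rw [W_eq m q1 d j])]
          simp only [mul_add, mul_sub, Finset.sum_add_distrib, Finset.sum_sub_distrib]
          rw [key m (d:ℤ)]
          rw [if_neg (by omega : ¬ ((d:ℤ) = 0))]
          have hpick : ∑ j ∈ range (m+2), (-1:ℤ)^j * ((m+1).choose j : ℤ) *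
              (if j = 0 then Bb m (d:ℤ) else 0) = Bb m (d:ℤ) := by
            rw [Finset.sum_eq_single 0]
            · simp
            · intro j _ hj; simp [hj]
            · intro h; simp at h
          rw [hpick]
          ring
    _ = Bb m (d:ℤ) - ∑ j ∈ Icc 2 (m+1), (-1:ℤ)^j * ((m+1).choose j : ℤ) *
          ∑ i ∈ range (j-1), Bb m ((d:ℤ) + ((i:ℤ)+1) * q1 - j * ((q1:ℤ)+1)) := by
        have hIcc : ∑ j ∈ Icc 2 (m+1), (-1:ℤ)^j * ((m+1).choose j : ℤ) *
            (∑ i ∈ range (j-1), Bb m ((d:ℤ) + ((i:ℤ)+1) * q1 - j * ((q1:ℤ)+1)))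
            = ∑ j ∈ range (m+2), (-1:ℤ)^j * ((m+1).choose j : ℤ) *
            (∑ i ∈ range (j-1), Bb m ((d:ℤ) + ((i:ℤ)+1) * q1 - j * ((q1:ℤ)+1))) := by
          apply Finset.sum_subset
          · intro j hj
            simp only [mem_Icc] at hj
            simp only [mem_range]
            omega
          · intro j hj hj'
            simp only [mem_range] at hj
            simp only [mem_Icc, not_and, not_le] at hj'
            have : j - 1 = 0 := by omega
            rw [this]
            simp
        rw [hIcc]
        ring
    _ = intBinom ((m:ℤ) + d) d -
          ∑ j ∈ Finset.Icc 2 (m + 1), (-1 : ℤ) ^ j * ((m + 1).choose j : ℤ) *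
            ∑ i ∈ Finset.range (j - 1),
              intBinom ((d : ℤ) + (i + 1) * ((q1+1:ℕ) - 1) - j * (q1+1:ℕ) + m)
                ((d : ℤ) + (i + 1) * ((q1+1:ℕ) - 1) - j * (q1+1:ℕ)) := by
        congr 1
        · rw [← intBinom_eq_Bb m (d:ℤ)]
          congr 1
          ring
        · refine Finset.sum_congr rfl fun j _ => ?_
          congr 1
          refine Finset.sum_congr rfl fun i _ => ?_
          rw [← intBinom_eq_Bb m ((d:ℤ) + ((i:ℤ)+1) * q1 - j * ((q1:ℤ)+1))]
          congr 1 <;> push_cast <;> ring
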